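/- arXiv:1101.1822 — 2 statements merged into one kernel-verified Lean document; each statement's English description precedes it below -/
import Mathlib

section
/- Suppose the stationary chain (X_n,Y_n)_{n∈ℤ} is absolutely regular, that is, ∫ ‖𝐏^{z,w}((X_n,Y_n)∈·) − π‖_TV π(dz,dw) → 0 as n→∞. Then both the marginal ergodicity assumption and the reversed marginal ergodicity assumption hold. -/
open MeasureTheory ProbabilityTheory Filter Set
open scoped ENNReal

noncomputable section

/-- The total variation distance between two (finite) measures. -/
def tvDist {α : Type*} [MeasurableSpace α] (μ ν : Measure α) : ℝ :=
  ⨆ A : { s : Set α // MeasurableSet s }, |(μ A.1).toReal - (ν A.1).toReal|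

/-- The product of two measures, written via `bind` so that no side conditions are needed. -/
def measProd {α β : Type*} [MeasurableSpace α] [MeasurableSpace β]
    (μ : Measure α) (ν : Measure β) : Measure (α × β) :=
  μ.bind fun a => ν.map (Prod.mk a)

/-- Iterates of a Markov transition kernel. -/
def kpow {α : Type*} [MeasurableSpace α] (κ : Kernel α α) : ℕ → Kernel α α
  | 0 => Kernel.id
  | n + 1 => (kpow κ n) ∘ₖ κ

/-- The canonical two-sided path space of the bivariate chain. -/
abbrev PathSp (E F : Type*) := (ℤ → E) × (ℤ → F)

section Setup

variable {E F : Type*} [MeasurableSpace E] [MeasurableSpace F]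

/-- The unobserved coordinate process. -/
def Xp (n : ℤ) (ω : PathSp E F) : E := ω.1 n

/-- The observed coordinate process. -/
def Yp (n : ℤ) (ω : PathSp E F) : F := ω.2 n

/-- The joint coordinate process. -/
def XYp (n : ℤ) (ω : PathSp E F) : E × F := (ω.1 n, ω.2 n)

/-- The canonical shift on path space. -/
def pathShift (ω : PathSp E F) : PathSp E F := (fun n => ω.1 (n + 1), fun n => ω.2 (n + 1))

/-- The shift on the observation path space. -/
def shiftObs (n : ℤ) (y : ℤ → F) : ℤ → F := fun k => y (k + n)

/-- `𝓕X I = σ{X_k : k ∈ I}`. -/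
def sigX (I : Set ℤ) : MeasurableSpace (PathSp E F) :=
  ⨆ k ∈ I, MeasurableSpace.comap (fun ω : PathSp E F => ω.1 k) inferInstance

/-- `𝓕Y I = σ{Y_k : k ∈ I}`. -/
def sigY (I : Set ℤ) : MeasurableSpace (PathSp E F) :=
  ⨆ k ∈ I, MeasurableSpace.comap (fun ω : PathSp E F => ω.2 k) inferInstance

/-- `σ{Y_k : k ≥ 0}` on the observation path space `F^ℤ`. -/
def sigObsPlus (F : Type*) [MeasurableSpace F] : MeasurableSpace (ℤ → F) :=
  ⨆ k ∈ Ici (0 : ℤ), MeasurableSpace.comap (fun y : ℤ → F => y k) inferInstance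

/-- Two-sided Markov property of a path-space law with one-step kernel `P`. -/
def TwoSidedMarkov (Plaw : Measure (PathSp E F)) (P : Kernel (E × F) (E × F)) : Prop :=
  ∀ (n : ℤ) (A : Set (E × F)), MeasurableSet A →
    ∀ S : Set (PathSp E F), MeasurableSet[sigX (Iic n) ⊔ sigY (Iic n)] S →
      Plaw (S ∩ XYp (n + 1) ⁻¹' A) = ∫⁻ ω in S, P (XYp n ω) A ∂Plaw

/-- Markov property of the forward chain `(X_n,Y_n)_{n ≥ m₀}`. -/
def FwdMarkovFrom (m₀ : ℤ) (μ : Measure (PathSp E F)) (P : Kernel (E × F) (E × F)) : Prop :=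
  ∀ n : ℤ, m₀ ≤ n → ∀ A : Set (E × F), MeasurableSet A →
    ∀ S : Set (PathSp E F), MeasurableSet[sigX (Icc m₀ n) ⊔ sigY (Icc m₀ n)] S →
      μ (S ∩ XYp (n + 1) ⁻¹' A) = ∫⁻ ω in S, P (XYp n ω) A ∂μ

/-- Markov property of the backward chain `(X_{-n},Y_{-n})_{n ≥ -m₀}` with kernel `P'`. -/
def BwdMarkovFrom (m₀ : ℤ) (μ : Measure (PathSp E F)) (P' : Kernel (E × F) (E × F)) : Prop :=
  ∀ n : ℤ, n ≤ m₀ → ∀ A : Set (E × F), MeasurableSet A →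
    ∀ S : Set (PathSp E F), MeasurableSet[sigX (Icc n m₀) ⊔ sigY (Icc n m₀)] S →
      μ (S ∩ XYp (n - 1) ⁻¹' A) = ∫⁻ ω in S, P' (XYp n ω) A ∂μ

/-- The canonical setup of the paper: `Plaw` is the law of the two-sided stationary Markov chain
`(X_n,Y_n)_{n∈ℤ}` with transition kernel `P` and stationary distribution `π`; `P'` is a version
of the reversed transition kernel; and `K (z,w) = Plaw^{z,w}` is the regular conditional
probability `Plaw( · | X_0 = z, Y_0 = w)`, under which the forward chain is Markov with kernel `P`
started at `(z,w)`, the backward chain is Markov with kernel `P'` started at `(z,w)`, and the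
forward and backward chains are independent. -/
structure CanonicalSetup (P P' : Kernel (E × F) (E × F)) (π : Measure (E × F))
    (Plaw : Measure (PathSp E F)) (K : Kernel (E × F) (PathSp E F)) : Prop where
  prob : IsProbabilityMeasure Plaw
  stationary : Plaw.map pathShift = Plaw
  marginal : Plaw.map (XYp 0) = π
  markov : TwoSidedMarkov Plaw P
  rev : ∀ A B : Set (E × F), MeasurableSet A → MeasurableSet B →
    ∫⁻ p in B, P' p A ∂π = ∫⁻ p in A, P p B ∂π
  disint : π.bind (fun p => K p) = Plaw
  start : ∀ p : E × F, K p {ω | XYp 0 ω = p} = 1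
  fwd : ∀ p : E × F, FwdMarkovFrom 0 (K p) P
  bwd : ∀ p : E × F, BwdMarkovFrom 0 (K p) P'
  indep : ∀ p : E × F,
    ProbabilityTheory.Indep (sigX (Ici 0) ⊔ sigY (Ici 0)) (sigX (Iic 0) ⊔ sigY (Iic 0)) (K p)

/-- Assumption (nondegeneracy): `P(z,w,dz',dw') = g(z,w,z',w') P₀(z,dz') Q(w,dw')` for a
strictly positive finite measurable density `g`. -/
structure Nondeg (P : Kernel (E × F) (E × F)) (P₀ : Kernel E E) (Q : Kernel F F)
    (g : E → F → E → F → ℝ≥0∞) : Prop where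
  markovP₀ : IsMarkovKernel P₀
  markovQ : IsMarkovKernel Q
  meas : Measurable fun q : (E × F) × E × F => g q.1.1 q.1.2 q.2.1 q.2.2
  pos : ∀ z w z' w', 0 < g z w z' w'
  fin : ∀ z w z' w', g z w z' w' < ⊤
  eq : ∀ p : E × F, P p = (measProd (P₀ p.1) (Q p.2)).withDensity fun q => g p.1 p.2 q.1 q.2

/-- Assumption (marginal ergodicity):
`∫ ‖Plaw^{z,w}(X_n ∈ ·) − Plaw(X_n ∈ ·)‖_TV π(dz,dw) → 0`. -/
def MarginalErgodic (π : Measure (E × F)) (Plaw : Measure (PathSp E F))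
    (K : Kernel (E × F) (PathSp E F)) : Prop :=
  Tendsto (fun n : ℕ =>
      ∫ p, tvDist ((K p).map (Xp (n : ℤ))) (Plaw.map (Xp (n : ℤ))) ∂π) atTop (nhds 0)

/-- Assumption (reversed marginal ergodicity):
`∫ ‖Plaw^{z,w}(X_{-n} ∈ ·) − Plaw(X_{-n} ∈ ·)‖_TV π(dz,dw) → 0`. -/
def RevMarginalErgodic (π : Measure (E × F)) (Plaw : Measure (PathSp E F))
    (K : Kernel (E × F) (PathSp E F)) : Prop :=
  Tendsto (fun n : ℕ =>
      ∫ p, tvDist ((K p).map (Xp (-(n : ℤ)))) (Plaw.map (Xp (-(n : ℤ)))) ∂π) atTop (nhds 0)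

/-- `m₁ = m₂` modulo `Plaw`-null sets (one inclusion: every `m₁`-set differs from an `m₂`-set by a
`Plaw`-null set). -/
def EqModNull (Plaw : Measure (PathSp E F)) (m₁ m₂ : MeasurableSpace (PathSp E F)) : Prop :=
  ∀ A : Set (PathSp E F), MeasurableSet[m₁] A →
    ∃ B : Set (PathSp E F), MeasurableSet[m₂] B ∧ Plaw ((A \ B) ∪ (B \ A)) = 0

end Setup

section More

variable {E F : Type*} [MeasurableSpace E] [MeasurableSpace F]

/-- `Pi` is a version of the nonlinear filter for the path-space law `mu`:
`Pi n` is a version of the regular conditional probability `mu(X_n ∈ · | Y_0,…,Y_n)`. -/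
def IsFilterOf (mu : Measure (PathSp E F)) (Pi : ℕ → PathSp E F → Measure E) : Prop :=
  ∀ n : ℕ,
    (∀ ω, IsProbabilityMeasure (Pi n ω)) ∧
    ∀ A : Set E, MeasurableSet A →
      Measurable[sigY (Icc 0 (n : ℤ))] (fun ω => Pi n ω A) ∧
      ∀ S : Set (PathSp E F), MeasurableSet[sigY (Icc 0 (n : ℤ))] S →
        ∫⁻ ω in S, Pi n ω A ∂mu = mu (S ∩ Xp (n : ℤ) ⁻¹' A)

/-- `κ` is a version of the regular conditional distribution of `X_n` given `Y_0`
under the path-space law `mu`. -/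
def IsCondLawX0 (mu : Measure (PathSp E F)) (n : ℕ) (κ : F → Measure E) : Prop :=
  (∀ w, IsProbabilityMeasure (κ w)) ∧
  ∀ A : Set E, MeasurableSet A →
    Measurable (fun w => κ w A) ∧
    ∀ B : Set F, MeasurableSet B →
      ∫⁻ w in B, κ w A ∂(mu.map (Yp 0)) = mu (Yp 0 ⁻¹' B ∩ Xp (n : ℤ) ⁻¹' A)

/-- `πX` is a version of the regular conditional probability `𝐏(Y_0 ∈ · | X_0)`,
equivalently a disintegration of `π` over its first marginal. -/
def IsCondYgivenX (π : Measure (E × F)) (πX : E → Measure F) : Prop :=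
  (∀ z, IsProbabilityMeasure (πX z)) ∧
  ∀ B : Set F, MeasurableSet B →
    Measurable (fun z => πX z B) ∧
    ∀ A : Set E, MeasurableSet A →
      ∫⁻ z in A, πX z B ∂(π.map Prod.fst) = π (A ×ˢ B)

/-- `πY` is a version of the regular conditional probability `𝐏(X_0 ∈ · | Y_0)`,
equivalently a disintegration of `π` over its second marginal. -/
def IsCondXgivenY (π : Measure (E × F)) (πY : F → Measure E) : Prop :=
  (∀ w, IsProbabilityMeasure (πY w)) ∧
  ∀ A : Set E, MeasurableSet A →
    Measurable (fun w => πY w A) ∧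
    ∀ B : Set F, MeasurableSet B →
      ∫⁻ w in B, πY w A ∂(π.map Prod.snd) = π (A ×ˢ B)

/-- `P_n^X(z,A) = ∫ P^n(z,w,A×F) π^X(z,dw)`, as a measure on `E`. -/
def PnX (P : Kernel (E × F) (E × F)) (πX : E → Measure F) (n : ℕ) (z : E) : Measure E :=
  ((πX z).bind fun w => (kpow P n) (z, w)).map Prod.fst

/-- `P_n^Y(w,B) = ∫ P^n(z,w,E×B) π^Y(w,dz)`, as a measure on `F`. -/
def PnY (P : Kernel (E × F) (E × F)) (πY : F → Measure E) (n : ℕ) (w : F) : Measure F :=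
  ((πY w).bind fun z => (kpow P n) (z, w)).map Prod.snd

/-- The one-step filter update
`U(ν,y₀,y₁)(A) = ∫ 1_A(z) g(z',y₀,z,y₁) P₀(z',dz) ν(dz') / (normalization)`. -/
def Ufilt (P₀ : Kernel E E) (g : E → F → E → F → ℝ≥0∞)
    (ν : Measure E) (y₀ y₁ : F) : Measure E :=
  let m : Measure E := ν.bind fun z' => (P₀ z').withDensity fun z => g z' y₀ z y₁
  (m Set.univ)⁻¹ • m

/-- The transition kernel `Γ` of the pair `(Π_n, Y_n)`:
`Γ(ν,y₀,A) = ∫∫ 1_A(U(ν,y₀,y₁),y₁) P(z,y₀,dz',dy₁) ν(dz)` (as a set function). -/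
def GammaFn (P : Kernel (E × F) (E × F)) (P₀ : Kernel E E) (g : E → F → E → F → ℝ≥0∞)
    (ν : Measure E) (y₀ : F) (A : Set (Measure E × F)) : ℝ≥0∞ :=
  ∫⁻ z, ∫⁻ q : E × F, A.indicator 1 (Ufilt P₀ g ν y₀ q.2, q.2) ∂(P (z, y₀)) ∂ν

/-- `m` is a `Γ`-invariant measure. -/
def GammaInvariant (P : Kernel (E × F) (E × F)) (P₀ : Kernel E E)
    (g : E → F → E → F → ℝ≥0∞) (m : Measure (Measure E × F)) : Prop :=
  ∀ A : Set (Measure E × F), MeasurableSet A →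
    ∫⁻ p, GammaFn P P₀ g p.1 p.2 A ∂m = m A

/-- `μ` is the barycenter of `m`: `μ(A×B) = ∫ ν(A) 1_B(w) m(dν,dw)`. -/
def HasBarycenter (m : Measure (Measure E × F)) (μ : Measure (E × F)) : Prop :=
  ∀ A : Set E, ∀ B : Set F, MeasurableSet A → MeasurableSet B →
    ∫⁻ p, p.1 A * B.indicator 1 p.2 ∂m = μ (A ×ˢ B)

/-- The transition kernel `Λ` of the triple `(Π_n, X_n, Y_n)`:
`Λ(ν,x₀,y₀,A) = ∫ 1_A(U(ν,y₀,y₁),x₁,y₁) P(x₀,y₀,dx₁,dy₁)` (as a set function). -/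
def LambdaFn (P : Kernel (E × F) (E × F)) (P₀ : Kernel E E) (g : E → F → E → F → ℝ≥0∞)
    (ν : Measure E) (x₀ : E) (y₀ : F) (A : Set (Measure E × E × F)) : ℝ≥0∞ :=
  ∫⁻ q : E × F, A.indicator 1 (Ufilt P₀ g ν y₀ q.2, q.1, q.2) ∂(P (x₀, y₀))

/-- `M` is a `Λ`-invariant measure. -/
def LambdaInvariant (P : Kernel (E × F) (E × F)) (P₀ : Kernel E E)
    (g : E → F → E → F → ℝ≥0∞) (M : Measure (Measure E × E × F)) : Prop :=
  ∀ A : Set (Measure E × E × F), MeasurableSet A →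
    ∫⁻ p, LambdaFn P P₀ g p.1 p.2.1 p.2.2 A ∂M = M A

/-- `M` has marginal `π` on `E × F`. -/
def HasMarginalPi (M : Measure (Measure E × E × F)) (π : Measure (E × F)) : Prop :=
  ∀ B : Set (E × F), MeasurableSet B →
    M ((fun p : Measure E × E × F => (p.2.1, p.2.2)) ⁻¹' B) = π B

/-- The class `𝔐` of measures `M` on `𝒫(E)×E×F` such that
`M(A×B×C) = ∫ ν(B) 1_{A×C}(ν,w) M(dν,dz,dw)`. -/
def InClassM (M : Measure (Measure E × E × F)) : Prop :=
  ∀ A : Set (Measure E), ∀ B : Set E, ∀ C : Set F,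
    MeasurableSet A → MeasurableSet B → MeasurableSet C →
      M (A ×ˢ B ×ˢ C) = ∫⁻ p, p.1 B * (A ×ˢ C).indicator 1 (p.1, p.2.2) ∂M

/-- `ϖ` is a version of the regular conditional probability `𝐏(X_0 ∈ · | F^Y)`. -/
def IsCondX0FullObs (Plaw : Measure (PathSp E F)) (ϖ : (ℤ → F) → Measure E) : Prop :=
  (∀ y, IsProbabilityMeasure (ϖ y)) ∧
  ∀ A : Set E, MeasurableSet A →
    Measurable (fun y => ϖ y A) ∧
    ∀ B : Set (ℤ → F), MeasurableSet B →
      ∫⁻ y in B, ϖ y A ∂(Plaw.map Prod.snd) = Plaw (Xp 0 ⁻¹' A ∩ Prod.snd ⁻¹' B)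

/-- `ϖ⁺` is a version of the regular conditional probability `𝐏(X_0 ∈ · | F^Y_+)`. -/
def IsCondX0FutureObs (Plaw : Measure (PathSp E F)) (ϖp : (ℤ → F) → Measure E) : Prop :=
  (∀ y, IsProbabilityMeasure (ϖp y)) ∧
  ∀ A : Set E, MeasurableSet A →
    Measurable[sigObsPlus F] (fun y => ϖp y A) ∧
    ∀ B : Set (ℤ → F), MeasurableSet[sigObsPlus F] B →
      ∫⁻ y in B, ϖp y A ∂(Plaw.map Prod.snd) = Plaw (Xp 0 ⁻¹' A ∩ Prod.snd ⁻¹' B)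

/-- `PX` is a version of the conditional transition kernel
`𝐏(X_{n+1} ∈ · | F^X_{≤ n} ∨ F^Y)(ω) = P^X(X_n(ω), Θ^n Y(ω), ·)` of the unobserved
process given the observations (a Markov chain in a random environment). -/
def IsCondKernelPX (Plaw : Measure (PathSp E F)) (PX : E → (ℤ → F) → Measure E) : Prop :=
  (∀ z y, IsProbabilityMeasure (PX z y)) ∧
  Measurable (fun q : E × (ℤ → F) => PX q.1 q.2) ∧
  ∀ (n : ℤ) (A : Set E), MeasurableSet A →
    ∀ S : Set (PathSp E F), MeasurableSet[sigX (Iic n) ⊔ sigY Set.univ] S →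
      ∫⁻ ω in S, PX (Xp n ω) (shiftObs n ω.2) A ∂Plaw = Plaw (S ∩ Xp (n + 1) ⁻¹' A)

/-- The time-`n` law of the conditional (random-environment) chain `𝐏_{z,y}(X_n ∈ ·)`
started at `z` in the environment `y`. -/
def condChainLaw (PX : E → (ℤ → F) → Measure E) : ℕ → E → (ℤ → F) → Measure E
  | 0, z, _ => Measure.dirac z
  | n + 1, z, y => (condChainLaw PX n z y).bind fun x => PX x (shiftObs (n : ℤ) y)

end More
section TVAux

open MeasureTheory ProbabilityTheory Filter Set MeasurableSpace
open scoped ENNReal symmDiff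

variable {α γ : Type*} [MeasurableSpace α] [MeasurableSpace γ]

private lemma tvDist_bddAbove (μ ν : Measure α) [IsFiniteMeasure μ] [IsFiniteMeasure ν] :
    BddAbove (Set.range fun A : {s : Set α // MeasurableSet s} =>
      |(μ A.1).toReal - (ν A.1).toReal|) := by
  refine ⟨(μ Set.univ).toReal + (ν Set.univ).toReal, ?_⟩
  rintro x ⟨A, rfl⟩
  have ha : (μ A.1).toReal ≤ (μ Set.univ).toReal :=
    ENNReal.toReal_mono (measure_ne_top μ _) (measure_mono (Set.subset_univ _))
  have hb : (ν A.1).toReal ≤ (ν Set.univ).toReal :=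
    ENNReal.toReal_mono (measure_ne_top ν _) (measure_mono (Set.subset_univ _))
  have ha0 : 0 ≤ (μ A.1).toReal := ENNReal.toReal_nonneg
  have hb0 : 0 ≤ (ν A.1).toReal := ENNReal.toReal_nonneg
  rw [abs_sub_le_iff]
  constructor <;> linarith

private lemma abs_le_tvDist {μ ν : Measure α} [IsFiniteMeasure μ] [IsFiniteMeasure ν]
    {A : Set α} (hA : MeasurableSet A) :
    |(μ A).toReal - (ν A).toReal| ≤ tvDist μ ν :=
  le_ciSup (tvDist_bddAbove μ ν) (⟨A, hA⟩ : {s : Set α // MeasurableSet s})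

private lemma tvDist_nonneg {μ ν : Measure α} [IsFiniteMeasure μ] [IsFiniteMeasure ν] :
    0 ≤ tvDist μ ν := by
  have := abs_le_tvDist (μ := μ) (ν := ν) MeasurableSet.empty
  simpa using this

private lemma tvDist_le {μ ν : Measure α} {c : ℝ}
    (h : ∀ A : Set α, MeasurableSet A → |(μ A).toReal - (ν A).toReal| ≤ c) :
    tvDist μ ν ≤ c := by
  haveI : Nonempty {s : Set α // MeasurableSet s} := ⟨⟨∅, MeasurableSet.empty⟩⟩
  exact ciSup_le fun A => h A.1 A.2

private lemma toReal_le_one (μ : Measure α) [IsProbabilityMeasure μ] (s : Set α) :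
    (μ s).toReal ≤ 1 := by
  have := ENNReal.toReal_mono ENNReal.one_ne_top (prob_le_one (μ := μ) (s := s))
  simpa using this

private lemma tvDist_le_two (μ ν : Measure α) [IsProbabilityMeasure μ] [IsProbabilityMeasure ν] :
    tvDist μ ν ≤ 2 := by
  refine tvDist_le fun A hA => ?_
  have h1 := toReal_le_one μ A
  have h2 := toReal_le_one ν A
  have h3 : (0:ℝ) ≤ (μ A).toReal := ENNReal.toReal_nonneg
  have h4 : (0:ℝ) ≤ (ν A).toReal := ENNReal.toReal_nonneg
  rw [abs_sub_le_iff]; constructor <;> linarith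

private lemma tvDist_map_le {f : α → γ} (hf : Measurable f)
    (μ ν : Measure α) [IsFiniteMeasure μ] [IsFiniteMeasure ν] :
    tvDist (μ.map f) (ν.map f) ≤ tvDist μ ν := by
  refine tvDist_le fun A hA => ?_
  rw [Measure.map_apply hf hA, Measure.map_apply hf hA]
  exact abs_le_tvDist (hf hA)

private lemma exists_tv_seq (α : Type*) [mα : MeasurableSpace α] [CountablyGenerated α] :
    ∃ S : ℕ → Set α, (∀ n, MeasurableSet (S n)) ∧
      ∀ (μ ν : Measure α), IsFiniteMeasure μ → IsFiniteMeasure ν →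
        tvDist μ ν = ⨆ n, |(μ (S n)).toReal - (ν (S n)).toReal| := by
  set 𝒜 : Set (Set α) := MeasureTheory.generateSetAlgebra (countableGeneratingSet α) with h𝒜
  have halg : MeasureTheory.IsSetAlgebra 𝒜 := MeasureTheory.isSetAlgebra_generateSetAlgebra
  have hgen : mα = MeasurableSpace.generateFrom 𝒜 := by
    rw [h𝒜, MeasureTheory.generateFrom_generateSetAlgebra_eq,
      MeasurableSpace.generateFrom_countableGeneratingSet]
  have hcount : 𝒜.Countable :=
    MeasureTheory.countable_generateSetAlgebra
      (MeasurableSpace.countable_countableGeneratingSet)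
  have hne : 𝒜.Nonempty := ⟨∅, halg.empty_mem⟩
  obtain ⟨S, hS⟩ := hcount.exists_eq_range hne
  have hmeas : ∀ n, MeasurableSet (S n) := by
    intro n
    have hmem : S n ∈ 𝒜 := by rw [hS]; exact Set.mem_range_self n
    have h := MeasurableSpace.measurableSet_generateFrom hmem
    rw [hgen]
    exact h
  refine ⟨S, hmeas, fun μ ν hμ hν => ?_⟩
  haveI := hμ; haveI := hν
  have hbdd2 : BddAbove (Set.range fun n => |(μ (S n)).toReal - (ν (S n)).toReal|) := by
    refine ⟨tvDist μ ν, ?_⟩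
    rintro x ⟨n, rfl⟩
    exact abs_le_tvDist (hmeas n)
  refine le_antisymm ?_ (ciSup_le fun n => abs_le_tvDist (hmeas n))
  refine tvDist_le fun A hA => ?_
  refine le_of_forall_pos_le_add fun ε hε => ?_
  have hdense := MeasureTheory.Measure.MeasureDense.of_generateFrom_isSetAlgebra_finite
    (μ := μ + ν) halg hgen
  obtain ⟨t, ht𝒜, hlt⟩ := hdense.approx A hA (measure_ne_top _ _) ε hε
  obtain ⟨n, hn⟩ : ∃ n, S n = t := by
    have := ht𝒜; rw [hS] at this; exact this
  have hts : MeasurableSet t := hn ▸ hmeas n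
  have h1 : |(μ A).toReal - (ν A).toReal| ≤
      |(μ A).toReal - (μ t).toReal| + (|(μ t).toReal - (ν t).toReal|
        + |(ν t).toReal - (ν A).toReal|) :=
    (abs_sub_le _ _ _).trans (by gcongr; exact abs_sub_le _ _ _)
  have h2 : |(μ A).toReal - (μ t).toReal| ≤ (μ (A ∆ t)).toReal :=
    abs_measureReal_sub_le_measureReal_symmDiff hA.nullMeasurableSet hts.nullMeasurableSet
  have h3 : |(ν t).toReal - (ν A).toReal| ≤ (ν (A ∆ t)).toReal := by
    rw [abs_sub_comm]
    exact abs_measureReal_sub_le_measureReal_symmDiff hA.nullMeasurableSet hts.nullMeasurableSet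
  have h4 : (μ (A ∆ t)).toReal + (ν (A ∆ t)).toReal < ε := by
    have hsum : μ (A ∆ t) + ν (A ∆ t) = (μ + ν) (A ∆ t) := by
      simp [Measure.add_apply]
    have hfin : (μ + ν) (A ∆ t) ≠ ∞ := measure_ne_top _ _
    have : ((μ + ν) (A ∆ t)).toReal < ε := by
      have := (ENNReal.toReal_lt_toReal hfin ENNReal.ofReal_ne_top).mpr hlt
      rwa [ENNReal.toReal_ofReal hε.le] at this
    calc (μ (A ∆ t)).toReal + (ν (A ∆ t)).toReal
        = ((μ + ν) (A ∆ t)).toReal := by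
          rw [← hsum, ENNReal.toReal_add (measure_ne_top _ _) (measure_ne_top _ _)]
      _ < ε := this
  have h5 : |(μ t).toReal - (ν t).toReal| ≤ ⨆ n, |(μ (S n)).toReal - (ν (S n)).toReal| := by
    rw [← hn]
    exact le_ciSup hbdd2 n
  linarith

private lemma measurable_tvDist [CountablyGenerated α]
    (κ : Kernel γ α) [IsFiniteKernel κ] (ν : Measure α) [IsFiniteMeasure ν] :
    Measurable fun p => tvDist (κ p) ν := by
  obtain ⟨S, hSm, hrep⟩ := exists_tv_seq α
  have heq : (fun p => tvDist (κ p) ν)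
      = fun p => ⨆ n, |((κ p) (S n)).toReal - (ν (S n)).toReal| :=
    funext fun p => hrep (κ p) ν inferInstance inferInstance
  rw [heq]
  exact Measurable.iSup fun n =>
    ((κ.measurable_coe (hSm n)).ennreal_toReal.sub measurable_const).abs

private lemma integrable_tvDist [CountablyGenerated α]
    (μ : Measure γ) [IsProbabilityMeasure μ]
    (κ : Kernel γ α) [IsMarkovKernel κ] (ν : Measure α) [IsProbabilityMeasure ν] :
    Integrable (fun p => tvDist (κ p) ν) μ := by
  refine ⟨(measurable_tvDist κ ν).aestronglyMeasurable, ?_⟩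
  refine HasFiniteIntegral.of_bounded (C := 2) (Filter.Eventually.of_forall fun p => ?_)
  rw [Real.norm_eq_abs, abs_of_nonneg tvDist_nonneg]
  exact tvDist_le_two _ _

end TVAux
section TVAux2

open MeasureTheory ProbabilityTheory Filter Set MeasurableSpace
open scoped ENNReal

variable {α γ : Type*} [MeasurableSpace α] [MeasurableSpace γ]

private lemma tvDist_compProd_le [CountablyGenerated α]
    (μ : Measure γ) [IsProbabilityMeasure μ] (κ : Kernel γ α) [IsMarkovKernel κ]
    (ν : Measure α) [IsProbabilityMeasure ν] :
    tvDist (μ ⊗ₘ κ) (μ.prod ν) ≤ ∫ p, tvDist (κ p) ν ∂μ := by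
  refine tvDist_le fun C hC => ?_
  have hmeas1 : Measurable fun p => κ p (Prod.mk p ⁻¹' C) :=
    Kernel.measurable_kernel_prodMk_left hC
  have hmeas2 : Measurable fun p => ν (Prod.mk p ⁻¹' C) := by
    have h := Kernel.measurable_kernel_prodMk_left (κ := Kernel.const γ ν) hC
    simpa [Kernel.const_apply] using h
  have ha : ((μ ⊗ₘ κ) C).toReal = ∫ p, (κ p (Prod.mk p ⁻¹' C)).toReal ∂μ := by
    rw [Measure.compProd_apply hC]
    exact (integral_toReal hmeas1.aemeasurable
      (Eventually.of_forall fun p => measure_lt_top _ _)).symm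
  have hb : ((μ.prod ν) C).toReal = ∫ p, (ν (Prod.mk p ⁻¹' C)).toReal ∂μ := by
    rw [Measure.prod_apply hC]
    exact (integral_toReal hmeas2.aemeasurable
      (Eventually.of_forall fun p => measure_lt_top _ _)).symm
  have hint1 : Integrable (fun p => (κ p (Prod.mk p ⁻¹' C)).toReal) μ := by
    refine ⟨hmeas1.ennreal_toReal.aestronglyMeasurable,
      HasFiniteIntegral.of_bounded (C := 1) (Eventually.of_forall fun p => ?_)⟩
    rw [Real.norm_eq_abs, abs_of_nonneg ENNReal.toReal_nonneg]
    exact toReal_le_one _ _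
  have hint2 : Integrable (fun p => (ν (Prod.mk p ⁻¹' C)).toReal) μ := by
    refine ⟨hmeas2.ennreal_toReal.aestronglyMeasurable,
      HasFiniteIntegral.of_bounded (C := 1) (Eventually.of_forall fun p => ?_)⟩
    rw [Real.norm_eq_abs, abs_of_nonneg ENNReal.toReal_nonneg]
    exact toReal_le_one _ _
  rw [ha, hb, ← integral_sub hint1 hint2]
  have habs : |∫ p, ((κ p (Prod.mk p ⁻¹' C)).toReal - (ν (Prod.mk p ⁻¹' C)).toReal) ∂μ|
      ≤ ∫ p, |(κ p (Prod.mk p ⁻¹' C)).toReal - (ν (Prod.mk p ⁻¹' C)).toReal| ∂μ := by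
    have hn := norm_integral_le_integral_norm
      (μ := μ) (f := fun p => (κ p (Prod.mk p ⁻¹' C)).toReal - (ν (Prod.mk p ⁻¹' C)).toReal)
    simpa [Real.norm_eq_abs] using hn
  refine habs.trans (integral_mono ((hint1.sub hint2).abs) (integrable_tvDist μ κ ν) ?_)
  intro p
  exact abs_le_tvDist (measurable_prodMk_left hC)

private lemma integral_tvDist_le_two_mul [CountablyGenerated α]
    (μ : Measure γ) [IsProbabilityMeasure μ] (κ : Kernel γ α) [IsMarkovKernel κ]
    (ν : Measure α) [IsProbabilityMeasure ν] :
    ∫ p, tvDist (κ p) ν ∂μ ≤ 2 * tvDist (μ ⊗ₘ κ) (μ.prod ν) := by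
  classical
  obtain ⟨S, hSm, hrep⟩ := exists_tv_seq α
  set h : ℕ → γ → ℝ := fun n p => ((κ p) (S n)).toReal - (ν (S n)).toReal with hh
  have hmh : ∀ n, Measurable (h n) := fun n =>
    (κ.measurable_coe (hSm n)).ennreal_toReal.sub measurable_const
  have habs2 : ∀ n p, |h n p| ≤ 2 := by
    intro n p
    have h1 := toReal_le_one (κ p) (S n)
    have h2 := toReal_le_one ν (S n)
    have h3 : (0:ℝ) ≤ ((κ p) (S n)).toReal := ENNReal.toReal_nonneg
    have h4 : (0:ℝ) ≤ (ν (S n)).toReal := ENNReal.toReal_nonneg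
    rw [hh, abs_sub_le_iff]; constructor <;> linarith
  have habs_tv : ∀ n p, |h n p| ≤ tvDist (κ p) ν := fun n p => abs_le_tvDist (hSm n)
  set T : ℕ → γ → ℝ := fun k p => (Finset.range (k + 1)).sup'
    Finset.nonempty_range_add_one (fun n => |h n p|) with hT
  have hle_T : ∀ k n p, n < k + 1 → |h n p| ≤ T k p := by
    intro k n p hn
    rw [hT]
    exact Finset.le_sup' (fun n => |h n p|) (Finset.mem_range.mpr hn)
  have hT_le : ∀ k p c, (∀ n, n < k + 1 → |h n p| ≤ c) → T k p ≤ c := by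
    intro k p c hc
    rw [hT]
    exact Finset.sup'_le _ (fun n => |h n p|) fun n hn => hc n (Finset.mem_range.mp hn)
  have hTsucc : ∀ k p, T (k + 1) p = |h (k + 1) p| ⊔ T k p := by
    intro k p
    refine le_antisymm (hT_le (k + 1) p (|h (k + 1) p| ⊔ T k p) fun n hn => ?_)
      (sup_le (hle_T (k + 1) (k + 1) p (Nat.lt_succ_self _))
        (hT_le k p (T (k + 1) p) fun n hn => hle_T (k + 1) n p (Nat.lt_succ_of_lt hn)))
    rcases Nat.lt_succ_iff_lt_or_eq.mp hn with hlt | heq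
    · exact le_sup_of_le_right (hle_T k n p hlt)
    · rw [heq]
      exact le_sup_left
  have hT0 : ∀ p, T 0 p = |h 0 p| := by
    intro p; rw [hT]; simp
  have hTmeas : ∀ k, Measurable (T k) := by
    intro k
    induction k with
    | zero =>
      have : T 0 = fun p => |h 0 p| := funext hT0
      rw [this]; exact (hmh 0).abs
    | succ k ih =>
      have : T (k + 1) = fun p => |h (k + 1) p| ⊔ T k p := funext (hTsucc k)
      rw [this]; exact ((hmh (k + 1)).abs).sup ih
  have hTle : ∀ k p, T k p ≤ tvDist (κ p) ν := fun k p =>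
    hT_le _ _ _ fun n _ => habs_tv n p
  have hTle2 : ∀ k p, T k p ≤ 2 := fun k p => hT_le _ _ _ fun n _ => habs2 n p
  have hT0le : ∀ k p, 0 ≤ T k p := fun k p =>
    le_trans (abs_nonneg (h 0 p)) (hle_T k 0 p k.succ_pos)
  have hTmono : ∀ p, Monotone fun k => T k p := by
    intro p
    refine monotone_nat_of_le_succ fun k => ?_
    rw [hTsucc k p]
    exact le_sup_right
  have htendsto : ∀ p, Tendsto (fun k => T k p) atTop (nhds (tvDist (κ p) ν)) := by
    intro p
    have hbddT : BddAbove (Set.range fun k => T k p) := by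
      refine ⟨tvDist (κ p) ν, ?_⟩
      rintro x ⟨k, rfl⟩; exact hTle k p
    have heq : ⨆ k, T k p = tvDist (κ p) ν := by
      refine le_antisymm (ciSup_le fun k => hTle k p) ?_
      rw [hrep (κ p) ν inferInstance inferInstance]
      refine ciSup_le fun n => ?_
      exact le_ciSup_of_le hbddT n (hle_T n n _ (Nat.lt_succ_self n))
    have := tendsto_atTop_ciSup (hTmono p) hbddT
    rwa [heq] at this
  have hint : Tendsto (fun k => ∫ p, T k p ∂μ) atTop (nhds (∫ p, tvDist (κ p) ν ∂μ)) := by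
    refine tendsto_integral_of_dominated_convergence (fun _ => (2:ℝ))
      (fun k => (hTmeas k).aestronglyMeasurable) (integrable_const 2)
      (fun k => Eventually.of_forall fun p => ?_) (Eventually.of_forall htendsto)
    rw [Real.norm_eq_abs, abs_of_nonneg (hT0le k p)]
    exact hTle2 k p
  refine le_of_tendsto hint (Eventually.of_forall fun k => ?_)
  -- fixed k
  have hTint : Integrable (T k) μ := by
    refine ⟨(hTmeas k).aestronglyMeasurable,
      HasFiniteIntegral.of_bounded (C := 2) (Eventually.of_forall fun p => ?_)⟩
    rw [Real.norm_eq_abs, abs_of_nonneg (hT0le k p)]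
    exact hTle2 k p
  set G : ℕ → Set γ := fun n => {p | T k p = |h n p|} ∩
    ⋂ m, ⋂ (_ : m < n), {p | T k p = |h m p|}ᶜ with hG
  have hGmeas : ∀ n, MeasurableSet (G n) := by
    intro n
    refine (measurableSet_eq_fun (hTmeas k) (hmh n).abs).inter ?_
    exact MeasurableSet.iInter fun m => MeasurableSet.iInter fun _ =>
      (measurableSet_eq_fun (hTmeas k) (hmh m).abs).compl
  have hGdisj : ∀ {m n : ℕ}, m < n → Disjoint (G m) (G n) := by
    intro m n hmn
    rw [Set.disjoint_left]
    rintro p ⟨hpm, -⟩ ⟨-, hpn⟩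
    exact (Set.mem_iInter.mp (Set.mem_iInter.mp hpn m) hmn) hpm
  have hGdisj' : ∀ {m n : ℕ}, m ≠ n → Disjoint (G m) (G n) := by
    intro m n hmn
    rcases hmn.lt_or_gt with hlt | hlt
    · exact hGdisj hlt
    · exact (hGdisj hlt).symm
  have hGcover : ∀ p, ∃ n < k + 1, p ∈ G n := by
    intro p
    have hex : ∃ n, n < k + 1 ∧ T k p = |h n p| := by
      obtain ⟨n, hn, hval⟩ := Finset.exists_mem_eq_sup'
        (Finset.nonempty_range_add_one (n := k)) (fun n => |h n p|)
      exact ⟨n, Finset.mem_range.mp hn, by rw [hT]; exact hval⟩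
    refine ⟨Nat.find hex, (Nat.find_spec hex).1, (Nat.find_spec hex).2, ?_⟩
    refine Set.mem_iInter.mpr fun m => Set.mem_iInter.mpr fun hm => ?_
    intro hcontra
    exact Nat.find_min hex hm ⟨lt_trans hm (Nat.find_spec hex).1, hcontra⟩
  set Gp : ℕ → Set γ := fun n => G n ∩ {p | 0 ≤ h n p} with hGp
  set Gm : ℕ → Set γ := fun n => G n ∩ {p | h n p < 0} with hGm
  have hGpmeas : ∀ n, MeasurableSet (Gp n) := fun n =>
    (hGmeas n).inter (measurableSet_le measurable_const (hmh n))
  have hGmmeas : ∀ n, MeasurableSet (Gm n) := fun n =>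
    (hGmeas n).inter (measurableSet_lt (hmh n) measurable_const)
  have hhint : ∀ n, Integrable (h n) μ := by
    intro n
    refine ⟨(hmh n).aestronglyMeasurable,
      HasFiniteIntegral.of_bounded (C := 2) (Eventually.of_forall fun p => ?_)⟩
    rw [Real.norm_eq_abs]; exact habs2 n p
  -- split of the integral
  have hunion : (⋃ n ∈ Finset.range (k + 1), G n) = Set.univ := by
    ext p
    simp only [Set.mem_iUnion, Set.mem_univ, iff_true]
    obtain ⟨n, hn, hp⟩ := hGcover p
    exact ⟨n, Finset.mem_range.mpr hn, hp⟩
  have hsplit : ∫ p, T k p ∂μ = ∑ n ∈ Finset.range (k + 1), ∫ p in G n, T k p ∂μ := by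
    conv_lhs => rw [← setIntegral_univ (μ := μ) (f := T k), ← hunion]
    refine integral_biUnion_finset _ (fun n _ => hGmeas n) ?_ (fun n _ => hTint.integrableOn)
    intro a _ b _ hab
    exact hGdisj' hab
  have hGsplitEq : ∀ n, G n = Gp n ∪ Gm n := by
    intro n
    rw [hGp, hGm, ← Set.inter_union_distrib_left]
    have : {p | 0 ≤ h n p} ∪ {p | h n p < 0} = Set.univ := by
      ext p; simp [le_or_gt]
    rw [this, Set.inter_univ]
  have hGsplit : ∀ n, ∫ p in G n, T k p ∂μ
      = ∫ p in Gp n, h n p ∂μ + ∫ p in Gm n, -h n p ∂μ := by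
    intro n
    rw [hGsplitEq n, setIntegral_union ?_ (hGmmeas n) hTint.integrableOn hTint.integrableOn]
    · congr 1
      · refine setIntegral_congr_fun (hGpmeas n) fun p hp => ?_
        rw [hp.1.1]
        exact abs_of_nonneg hp.2
      · refine setIntegral_congr_fun (hGmmeas n) fun p hp => ?_
        rw [hp.1.1]
        exact abs_of_neg hp.2
    · refine Set.disjoint_left.mpr ?_
      rintro p ⟨-, h1⟩ ⟨-, h2⟩
      exact absurd (show (0:ℝ) ≤ h n p from h1) (not_le.mpr (show h n p < 0 from h2))
  -- key identity
  have key : ∀ (W : ℕ → Set γ), (∀ n, MeasurableSet (W n)) → (∀ n, W n ⊆ G n) →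
      ∑ n ∈ Finset.range (k + 1), ∫ p in W n, h n p ∂μ
        = ((μ ⊗ₘ κ) (⋃ n ∈ Finset.range (k + 1), W n ×ˢ S n)).toReal
          - ((μ.prod ν) (⋃ n ∈ Finset.range (k + 1), W n ×ˢ S n)).toReal := by
    intro W hWm hWsub
    have hdisj : (↑(Finset.range (k + 1)) : Set ℕ).PairwiseDisjoint
        fun n => W n ×ˢ S n := by
      intro a _ b _ hab
      exact Set.Disjoint.set_prod_left ((hGdisj' hab).mono (hWsub a) (hWsub b)) _ _
    rw [measure_biUnion_finset hdisj (fun n _ => (hWm n).prod (hSm n)),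
      measure_biUnion_finset hdisj (fun n _ => (hWm n).prod (hSm n)),
      ENNReal.toReal_sum (fun n _ => measure_ne_top _ _),
      ENNReal.toReal_sum (fun n _ => measure_ne_top _ _),
      ← Finset.sum_sub_distrib]
    refine Finset.sum_congr rfl fun n _ => ?_
    rw [Measure.compProd_apply_prod (hWm n) (hSm n), Measure.prod_prod]
    have h1 : ∫ p in W n, ((κ p) (S n)).toReal ∂μ
        = (∫⁻ p in W n, κ p (S n) ∂μ).toReal :=
      integral_toReal ((κ.measurable_coe (hSm n)).aemeasurable.restrict)
        (Eventually.of_forall fun p => measure_lt_top _ _)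
    have h2 : ∫ p in W n, (ν (S n)).toReal ∂μ = (μ (W n)).toReal * (ν (S n)).toReal := by
      rw [setIntegral_const, smul_eq_mul]; rfl
    have hint1 : IntegrableOn (fun p => ((κ p) (S n)).toReal) (W n) μ := by
      refine Integrable.integrableOn ⟨(κ.measurable_coe (hSm n)).ennreal_toReal.aestronglyMeasurable,
        HasFiniteIntegral.of_bounded (C := 1) (Eventually.of_forall fun p => ?_)⟩
      rw [Real.norm_eq_abs, abs_of_nonneg ENNReal.toReal_nonneg]
      exact toReal_le_one _ _
    have hint2 : IntegrableOn (fun _ => (ν (S n)).toReal) (W n) μ :=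
      (integrable_const _).integrableOn
    rw [hh]
    rw [integral_sub hint1 hint2, h1, h2, ENNReal.toReal_mul]
  have hApos : ∑ n ∈ Finset.range (k + 1), ∫ p in Gp n, h n p ∂μ
      ≤ tvDist (μ ⊗ₘ κ) (μ.prod ν) := by
    rw [key Gp hGpmeas (fun n => Set.inter_subset_left)]
    have hCp : MeasurableSet (⋃ n ∈ Finset.range (k + 1), Gp n ×ˢ S n) :=
      (Finset.range (k + 1)).measurableSet_biUnion fun n _ => (hGpmeas n).prod (hSm n)
    exact (le_abs_self _).trans (abs_le_tvDist hCp)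
  have hAneg : ∑ n ∈ Finset.range (k + 1), ∫ p in Gm n, -h n p ∂μ
      ≤ tvDist (μ ⊗ₘ κ) (μ.prod ν) := by
    have : ∑ n ∈ Finset.range (k + 1), ∫ p in Gm n, -h n p ∂μ
        = -(∑ n ∈ Finset.range (k + 1), ∫ p in Gm n, h n p ∂μ) := by
      rw [← Finset.sum_neg_distrib]
      exact Finset.sum_congr rfl fun n _ => integral_neg _
    rw [this, key Gm hGmmeas (fun n => Set.inter_subset_left), neg_sub]
    have hCm : MeasurableSet (⋃ n ∈ Finset.range (k + 1), Gm n ×ˢ S n) :=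
      (Finset.range (k + 1)).measurableSet_biUnion fun n _ => (hGmmeas n).prod (hSm n)
    refine (le_abs_self _).trans ?_
    rw [abs_sub_comm]
    exact abs_le_tvDist hCm
  calc ∫ p, T k p ∂μ
      = ∑ n ∈ Finset.range (k + 1), (∫ p in Gp n, h n p ∂μ + ∫ p in Gm n, -h n p ∂μ) := by
        rw [hsplit]; exact Finset.sum_congr rfl fun n _ => hGsplit n
    _ = (∑ n ∈ Finset.range (k + 1), ∫ p in Gp n, h n p ∂μ)
        + ∑ n ∈ Finset.range (k + 1), ∫ p in Gm n, -h n p ∂μ := Finset.sum_add_distrib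
    _ ≤ 2 * tvDist (μ ⊗ₘ κ) (μ.prod ν) := by linarith

end TVAux2

theorem absolutely_regular_implies_marginal_ergodicity
    {E F : Type*}
    [MeasurableSpace E] [TopologicalSpace E] [PolishSpace E] [BorelSpace E]
    [MeasurableSpace F] [TopologicalSpace F] [PolishSpace F] [BorelSpace F]
    (P P' : Kernel (E × F) (E × F)) [IsMarkovKernel P] [IsMarkovKernel P']
    (π : Measure (E × F)) [IsProbabilityMeasure π]
    (hπinv : π.bind (fun p => P p) = π)
    (Plaw : Measure (PathSp E F)) (K : Kernel (E × F) (PathSp E F)) [IsMarkovKernel K]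
    (hsetup : CanonicalSetup P P' π Plaw K)
    (habsreg : Tendsto (fun n : ℕ =>
        ∫ p, tvDist ((K p).map (XYp (n : ℤ))) π ∂π) atTop (nhds 0)) :
    MarginalErgodic π Plaw K ∧ RevMarginalErgodic π Plaw K := by
  classical
  haveI hPlawProb : IsProbabilityMeasure Plaw := hsetup.prob
  have hXYm : ∀ m : ℤ, Measurable (XYp (E := E) (F := F) m) := fun m =>
    ((measurable_pi_apply m).comp measurable_fst).prodMk
      ((measurable_pi_apply m).comp measurable_snd)
  have hXm : ∀ m : ℤ, Measurable (Xp (E := E) (F := F) m) := fun m =>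
    (measurable_pi_apply m).comp measurable_fst
  have hshift : Measurable (pathShift (E := E) (F := F)) := by
    refine Measurable.prodMk ?_ ?_
    · exact measurable_pi_lambda _ fun n => (measurable_pi_apply (n + 1)).comp measurable_fst
    · exact measurable_pi_lambda _ fun n => (measurable_pi_apply (n + 1)).comp measurable_snd
  have hstep1 : ∀ a : ℤ, Plaw.map (XYp (E := E) (F := F) a) = Plaw.map (XYp (a + 1)) := by
    intro a
    conv_lhs => rw [← hsetup.stationary]
    rw [Measure.map_map (hXYm a) hshift]
    rfl
  have hsingle : ∀ m : ℤ, Plaw.map (XYp (E := E) (F := F) m) = π := by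
    intro m
    induction m using Int.induction_on with
    | zero => exact hsetup.marginal
    | succ i ih => rw [← hstep1 i]; exact ih
    | pred i ih =>
      rw [hstep1 (-(i : ℤ) - 1), show (-(i : ℤ) - 1 + 1) = -(i : ℤ) by ring]
      exact ih
  have hpair_meas : ∀ a b : ℤ,
      Measurable fun ω : PathSp E F => (XYp a ω, XYp b ω) := fun a b =>
    (hXYm a).prodMk (hXYm b)
  have hpair_shift : ∀ a b : ℤ,
      Plaw.map (fun ω => (XYp (E := E) (F := F) a ω, XYp b ω))
        = Plaw.map (fun ω => (XYp (a + 1) ω, XYp (b + 1) ω)) := by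
    intro a b
    conv_lhs => rw [← hsetup.stationary]
    rw [Measure.map_map (hpair_meas a b) hshift]
    rfl
  have hpair_shift_n : ∀ (j : ℕ) (a b : ℤ),
      Plaw.map (fun ω => (XYp (E := E) (F := F) a ω, XYp b ω))
        = Plaw.map (fun ω => (XYp (a + (j : ℤ)) ω, XYp (b + (j : ℤ)) ω)) := by
    intro j
    induction j with
    | zero => intro a b; simp
    | succ j ih =>
      intro a b
      rw [hpair_shift a b, ih (a + 1) (b + 1),
        show a + 1 + (j : ℤ) = a + ((j : ℕ) + 1 : ℕ) by push_cast; ring,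
        show b + 1 + (j : ℤ) = b + ((j : ℕ) + 1 : ℕ) by push_cast; ring]
  have hpairswap : ∀ n : ℕ,
      Plaw.map (fun ω => (XYp (E := E) (F := F) 0 ω, XYp (-(n : ℤ)) ω))
        = Plaw.map (fun ω => (XYp (n : ℤ) ω, XYp 0 ω)) := by
    intro n
    have h := hpair_shift_n n 0 (-(n : ℤ))
    rwa [show (0 : ℤ) + (n : ℤ) = (n : ℤ) by ring,
      show -(n : ℤ) + (n : ℤ) = 0 by ring] at h
  have hjoint : ∀ m : ℤ, (π ⊗ₘ (K.map (XYp m)))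
      = Plaw.map (fun ω => (XYp (E := E) (F := F) 0 ω, XYp m ω)) := by
    intro m
    refine Measure.ext fun C hC => ?_
    rw [Measure.compProd_apply hC, ← hsetup.disint,
      Measure.map_apply (hpair_meas 0 m) hC,
      Measure.bind_apply ((hpair_meas 0 m) hC) K.measurable.aemeasurable]
    refine lintegral_congr fun p => ?_
    rw [Kernel.map_apply K (hXYm m),
      Measure.map_apply (hXYm m) (measurable_prodMk_left hC)]
    haveI : IsProbabilityMeasure (K p) := inferInstance
    have hstart : K p {ω | XYp 0 ω = p} = 1 := hsetup.start p
    have hms : MeasurableSet {ω : PathSp E F | XYp 0 ω = p} := by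
      have heq : {ω : PathSp E F | XYp 0 ω = p} = XYp 0 ⁻¹' {p} := rfl
      rw [heq]
      exact hXYm 0 (measurableSet_singleton p)
    have hnull : K p ({ω | XYp 0 ω = p}ᶜ) = 0 := by
      rw [measure_compl hms (measure_ne_top _ _), measure_univ, hstart]
      simp
    refine measure_congr ?_
    have hmem : {ω : PathSp E F | XYp 0 ω = p} ∈ ae (K p) := by
      rw [mem_ae_iff]; exact hnull
    rw [Filter.eventuallyEq_set]
    filter_upwards [hmem] with ω hω
    have hω' : XYp 0 ω = p := hω
    simp only [Set.mem_preimage, hω']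
  have hmapfst : ∀ m : ℤ, Plaw.map (Xp (E := E) (F := F) m) = π.map Prod.fst := by
    intro m
    have hcomp : Xp (E := E) (F := F) m = Prod.fst ∘ XYp m := rfl
    rw [hcomp, ← Measure.map_map measurable_fst (hXYm m), hsingle m]
  haveI : IsProbabilityMeasure (π.map (Prod.fst : E × F → E)) :=
    Measure.isProbabilityMeasure_map measurable_fst.aemeasurable
  have hpoint : ∀ (m : ℤ) (p : E × F),
      tvDist ((K p).map (Xp m)) (Plaw.map (Xp m)) ≤ tvDist ((K p).map (XYp m)) π := by
    intro m p
    haveI : IsProbabilityMeasure (K p) := inferInstance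
    haveI : IsProbabilityMeasure ((K p).map (XYp m)) :=
      Measure.isProbabilityMeasure_map (hXYm m).aemeasurable
    have h1 : (K p).map (Xp m) = ((K p).map (XYp m)).map Prod.fst := by
      rw [Measure.map_map measurable_fst (hXYm m)]
      rfl
    rw [hmapfst m, h1]
    exact tvDist_map_le measurable_fst _ _
  have hker : ∀ m : ℤ, (fun p : E × F => tvDist ((K p).map (XYp m)) π)
      = fun p => tvDist ((K.map (XYp m)) p) π := by
    intro m; funext p; rw [Kernel.map_apply K (hXYm m)]
  have hkerX : ∀ m : ℤ, (fun p : E × F => tvDist ((K p).map (Xp m)) (Plaw.map (Xp m)))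
      = fun p => tvDist ((K.map (Xp m)) p) (π.map Prod.fst) := by
    intro m; funext p; rw [Kernel.map_apply K (hXm m), hmapfst m]
  have hg_int : ∀ m : ℤ, Integrable (fun p => tvDist ((K p).map (XYp m)) π) π := by
    intro m
    rw [hker m]
    haveI := Kernel.IsMarkovKernel.map K (hXYm m)
    exact integrable_tvDist π (K.map (XYp m)) π
  have hf_int : ∀ m : ℤ,
      Integrable (fun p => tvDist ((K p).map (Xp m)) (Plaw.map (Xp m))) π := by
    intro m
    rw [hkerX m]
    haveI := Kernel.IsMarkovKernel.map K (hXm m)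
    exact integrable_tvDist π (K.map (Xp m)) (π.map Prod.fst)
  have hf_nonneg : ∀ (m : ℤ) (p : E × F),
      0 ≤ tvDist ((K p).map (Xp m)) (Plaw.map (Xp m)) := by
    intro m p
    haveI : IsProbabilityMeasure (K p) := inferInstance
    haveI : IsProbabilityMeasure ((K p).map (Xp m)) :=
      Measure.isProbabilityMeasure_map (hXm m).aemeasurable
    haveI : IsProbabilityMeasure (Plaw.map (Xp (E := E) (F := F) m)) := by
      rw [hmapfst m]; infer_instance
    exact tvDist_nonneg
  have hforward : MarginalErgodic π Plaw K := by
    show Tendsto (fun n : ℕ =>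
      ∫ p, tvDist ((K p).map (Xp (n : ℤ))) (Plaw.map (Xp (n : ℤ))) ∂π) atTop (nhds 0)
    exact squeeze_zero (fun n => integral_nonneg (hf_nonneg (n : ℤ)))
      (fun n => integral_mono (hf_int (n : ℤ)) (hg_int (n : ℤ)) (hpoint (n : ℤ))) habsreg
  have hrev_bound : ∀ n : ℕ,
      ∫ p, tvDist ((K p).map (Xp (-(n : ℤ)))) (Plaw.map (Xp (-(n : ℤ)))) ∂π
        ≤ 2 * ∫ p, tvDist ((K p).map (XYp (n : ℤ))) π ∂π := by
    intro n
    haveI := Kernel.IsMarkovKernel.map K (hXYm (-(n : ℤ)))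
    haveI := Kernel.IsMarkovKernel.map K (hXYm (n : ℤ))
    have step1 : ∫ p, tvDist ((K p).map (Xp (-(n : ℤ)))) (Plaw.map (Xp (-(n : ℤ)))) ∂π
        ≤ ∫ p, tvDist ((K p).map (XYp (-(n : ℤ)))) π ∂π :=
      integral_mono (hf_int _) (hg_int _) (hpoint (-(n : ℤ)))
    have step2 : ∫ p, tvDist ((K p).map (XYp (-(n : ℤ)))) π ∂π
        ≤ 2 * tvDist (π ⊗ₘ K.map (XYp (-(n : ℤ)))) (π.prod π) := by
      rw [hker (-(n : ℤ))]
      exact integral_tvDist_le_two_mul π (K.map (XYp (-(n : ℤ)))) π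
    have step3 : tvDist (π ⊗ₘ K.map (XYp (-(n : ℤ)))) (π.prod π)
        ≤ ∫ p, tvDist ((K p).map (XYp (n : ℤ))) π ∂π := by
      rw [hjoint (-(n : ℤ)), hpairswap n]
      haveI : IsProbabilityMeasure
          (Plaw.map (fun ω => (XYp (E := E) (F := F) 0 ω, XYp (n : ℤ) ω))) :=
        Measure.isProbabilityMeasure_map (hpair_meas 0 (n : ℤ)).aemeasurable
      have hswap : Plaw.map (fun ω => (XYp (E := E) (F := F) (n : ℤ) ω, XYp 0 ω))
          = (Plaw.map (fun ω => (XYp 0 ω, XYp (n : ℤ) ω))).map Prod.swap := by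
        rw [Measure.map_map measurable_swap (hpair_meas 0 (n : ℤ))]
        rfl
      calc tvDist (Plaw.map (fun ω => (XYp (E := E) (F := F) (n : ℤ) ω, XYp 0 ω))) (π.prod π)
          = tvDist ((Plaw.map (fun ω => (XYp 0 ω, XYp (n : ℤ) ω))).map Prod.swap)
              ((π.prod π).map Prod.swap) := by rw [← hswap, Measure.prod_swap]
        _ ≤ tvDist (Plaw.map (fun ω => (XYp 0 ω, XYp (n : ℤ) ω))) (π.prod π) :=
            tvDist_map_le measurable_swap _ _
        _ = tvDist (π ⊗ₘ K.map (XYp (n : ℤ))) (π.prod π) := by rw [hjoint (n : ℤ)]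
        _ ≤ ∫ p, tvDist ((K p).map (XYp (n : ℤ))) π ∂π := by
            rw [hker (n : ℤ)]
            exact tvDist_compProd_le π (K.map (XYp (n : ℤ))) π
    have step4 : 2 * tvDist (π ⊗ₘ K.map (XYp (-(n : ℤ)))) (π.prod π)
        ≤ 2 * ∫ p, tvDist ((K p).map (XYp (n : ℤ))) π ∂π :=
      mul_le_mul_of_nonneg_left step3 (by norm_num)
    exact step1.trans (step2.trans step4)
  have hreverse : RevMarginalErgodic π Plaw K := by
    show Tendsto (fun n : ℕ =>
      ∫ p, tvDist ((K p).map (Xp (-(n : ℤ)))) (Plaw.map (Xp (-(n : ℤ)))) ∂π) atTop (nhds 0)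
    have hlim : Tendsto (fun n : ℕ =>
        2 * ∫ p, tvDist ((K p).map (XYp (n : ℤ))) π ∂π) atTop (nhds 0) := by
      have h2 := habsreg.const_mul (2 : ℝ)
      simpa using h2
    exact squeeze_zero (fun n => integral_nonneg (hf_nonneg (-(n : ℤ)))) hrev_bound hlim
  exact ⟨hforward, hreverse⟩

end
end

section
/- Suppose the nondegeneracy assumption holds. Then for every n∈ℕ there exists a strictly positive measurable function G_n : E×F×E×F → (0,∞) such that the n-step kernel factorizes as P^n(z,w,dz',dw') = G_n(z,w,z',w') P_n^X(z,dz') P_n^Y(w,dw'). -/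
open MeasureTheory ProbabilityTheory Filter Set
open scoped ENNReal

noncomputable section

section AuxHelpers

open scoped Classical

variable {α β γ : Type*} [MeasurableSpace α] [MeasurableSpace β] [MeasurableSpace γ]

lemma aux_measurable_map_prod_mk (ν : Measure β) [SFinite ν] :
    Measurable fun a : α => ν.map (Prod.mk a) :=
  Measure.measurable_of_measurable_coe _ fun s hs => by
    simp_rw [Measure.map_apply measurable_prodMk_left hs]
    exact measurable_measure_prodMk_left hs

lemma aux_measProd_eq_prod (μ : Measure α) (ν : Measure β) [SFinite ν] :
    measProd μ ν = μ.prod ν := by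
  ext s hs
  rw [measProd, Measure.bind_apply hs (aux_measurable_map_prod_mk ν).aemeasurable, Measure.prod_apply hs]
  exact lintegral_congr fun a => Measure.map_apply measurable_prodMk_left hs

lemma aux_kpow_markov (κ : Kernel α α) [IsMarkovKernel κ] (n : ℕ) :
    IsMarkovKernel (kpow κ n) := by
  induction n with
  | zero =>
    refine ⟨fun a => ?_⟩
    show IsProbabilityMeasure (Kernel.id a)
    rw [Kernel.id_apply]; infer_instance
  | succ n ih =>
    show IsMarkovKernel (kpow κ n ∘ₖ κ)
    haveI := ih
    infer_instance

lemma aux_kpow_succ' (κ : Kernel α α) [IsSFiniteKernel κ] (n : ℕ) :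
    kpow κ (n + 1) = κ ∘ₖ kpow κ n := by
  induction n with
  | zero =>
    show kpow κ 0 ∘ₖ κ = κ ∘ₖ kpow κ 0
    show Kernel.id ∘ₖ κ = κ ∘ₖ Kernel.id
    rw [Kernel.id_comp, Kernel.comp_id]
  | succ n ih =>
    show kpow κ (n + 1) ∘ₖ κ = κ ∘ₖ kpow κ (n + 1)
    rw [ih, Kernel.comp_assoc]
    rw [show (kpow κ n ∘ₖ κ) = kpow κ (n + 1) from rfl, ih]

lemma aux_bind_ac_bind {μ ν : Measure α} {κ₁ κ₂ : α → Measure β}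
    (hκ₁ : Measurable κ₁) (hκ₂ : Measurable κ₂) (hμν : μ ≪ ν) (hfib : ∀ a, κ₁ a ≪ κ₂ a) :
    μ.bind κ₁ ≪ ν.bind κ₂ := by
  refine Measure.AbsolutelyContinuous.mk fun s hs h0 => ?_
  rw [Measure.bind_apply hs hκ₂.aemeasurable] at h0
  rw [Measure.bind_apply hs hκ₁.aemeasurable]
  have h2 : ∀ᵐ a ∂ν, κ₂ a s = 0 :=
    (lintegral_eq_zero_iff ((Measure.measurable_coe hs).comp hκ₂)).mp h0
  have h1 : ∀ᵐ a ∂μ, κ₁ a s = 0 :=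
    (h2.filter_mono hμν.ae_le).mono fun a ha => hfib a ha
  exact (lintegral_eq_zero_iff ((Measure.measurable_coe hs).comp hκ₁)).mpr h1

lemma aux_bind_ac_const {μ : Measure α} {κ : α → Measure β} (hκ : Measurable κ) {m : Measure β}
    (hfib : ∀ a, κ a ≪ m) : μ.bind κ ≪ m := by
  refine Measure.AbsolutelyContinuous.mk fun s hs h0 => ?_
  rw [Measure.bind_apply hs hκ.aemeasurable]
  have : ∀ a, κ a s = 0 := fun a => hfib a h0
  simp [this]

lemma aux_const_ac_bind {μ : Measure α} (hμ : μ ≠ 0) {κ : α → Measure β} (hκ : Measurable κ)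
    {m : Measure β} (hfib : ∀ a, m ≪ κ a) : m ≪ μ.bind κ := by
  refine Measure.AbsolutelyContinuous.mk fun s hs h0 => ?_
  rw [Measure.bind_apply hs hκ.aemeasurable] at h0
  have h2 : ∀ᵐ a ∂μ, κ a s = 0 :=
    (lintegral_eq_zero_iff ((Measure.measurable_coe hs).comp hκ)).mp h0
  haveI : (ae μ).NeBot := ae_neBot.mpr hμ
  obtain ⟨a, ha⟩ := h2.exists
  exact hfib a ha

lemma aux_map_bind (μ : Measure α) {κ : α → Measure β} (hκ : Measurable κ) {f : β → γ}
    (hf : Measurable f) : (μ.bind κ).map f = μ.bind fun a => (κ a).map f := by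
  have hm2 : Measurable fun a => (κ a).map f := (Measure.measurable_map f hf).comp hκ
  ext s hs
  rw [Measure.map_apply hf hs, Measure.bind_apply (hf hs) hκ.aemeasurable, Measure.bind_apply hs hm2.aemeasurable]
  exact lintegral_congr fun a => (Measure.map_apply hf hs).symm

lemma aux_isProbabilityMeasure_bind {μ : Measure α} [IsProbabilityMeasure μ]
    {κ : α → Measure β} (hκ : Measurable κ) (h : ∀ a, IsProbabilityMeasure (κ a)) :
    IsProbabilityMeasure (μ.bind κ) := by
  constructor
  rw [Measure.bind_apply MeasurableSet.univ hκ.aemeasurable]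
  have : ∀ a, κ a Set.univ = 1 := fun a => (h a).measure_univ
  simp [this]

end AuxHelpers

section AuxMain

variable {E F : Type*} [MeasurableSpace E] [MeasurableSpace F]

lemma aux_nondeg_ac {P : Kernel (E × F) (E × F)} {P₀ : Kernel E E} {Q : Kernel F F}
    {g : E → F → E → F → ℝ≥0∞} (hnd : Nondeg P P₀ Q g) (p : E × F) :
    P p ≪ (P₀ p.1).prod (Q p.2) ∧ (P₀ p.1).prod (Q p.2) ≪ P p := by
  haveI := hnd.markovP₀; haveI := hnd.markovQ
  have h := hnd.eq p
  rw [aux_measProd_eq_prod] at h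
  constructor
  · rw [h]; exact withDensity_absolutelyContinuous _ _
  · rw [h]
    refine withDensity_absolutelyContinuous' ?_ ?_
    · exact (hnd.meas.comp measurable_prodMk_left).aemeasurable
    · exact Filter.Eventually.of_forall fun q => (hnd.pos p.1 p.2 q.1 q.2).ne'

lemma aux_measurable_prodkernel (P₀ : Kernel E E) [IsMarkovKernel P₀]
    (Q : Kernel F F) [IsMarkovKernel Q] :
    Measurable fun q : E × F => (P₀ q.1).prod (Q q.2) := by
  have heq : (fun q : E × F => (P₀ q.1).prod (Q q.2)) =
      fun q => ((P₀.comap Prod.fst measurable_fst) ×ₖ (Q.comap Prod.snd measurable_snd)) q := by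
    funext q
    rw [Kernel.prod_apply, Kernel.comap_apply, Kernel.comap_apply]
  rw [heq]
  exact Kernel.measurable _

lemma aux_prod_bind_prod (μ : Measure E) (ν : Measure F)
    [IsProbabilityMeasure μ] [IsProbabilityMeasure ν]
    (P₀ : Kernel E E) [IsMarkovKernel P₀] (Q : Kernel F F) [IsMarkovKernel Q] :
    (μ.prod ν).bind (fun q => (P₀ q.1).prod (Q q.2)) = (μ.bind P₀).prod (ν.bind Q) := by
  have hPQ := aux_measurable_prodkernel P₀ Q
  haveI h1 : IsProbabilityMeasure ((μ.prod ν).bind fun q => (P₀ q.1).prod (Q q.2)) :=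
    aux_isProbabilityMeasure_bind hPQ fun q => by infer_instance
  haveI h2 : IsProbabilityMeasure (μ.bind fun a => P₀ a) :=
    aux_isProbabilityMeasure_bind (Kernel.measurable P₀) fun a => by infer_instance
  haveI h3 : IsProbabilityMeasure (ν.bind fun b => Q b) :=
    aux_isProbabilityMeasure_bind (Kernel.measurable Q) fun b => by infer_instance
  refine ext_of_generate_finite _ generateFrom_prod.symm isPiSystem_prod ?_ ?_
  · rintro s ⟨A, hA, B, hB, rfl⟩
    have hA' : MeasurableSet A := hA
    have hB' : MeasurableSet B := hB
    rw [Measure.bind_apply (hA'.prod hB') hPQ.aemeasurable, Measure.prod_prod,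
      Measure.bind_apply hA' (Kernel.measurable P₀).aemeasurable, Measure.bind_apply hB' (Kernel.measurable Q).aemeasurable,
      ← lintegral_prod_mul (Kernel.measurable_coe P₀ hA').aemeasurable
        (Kernel.measurable_coe Q hB').aemeasurable]
    exact lintegral_congr fun q => Measure.prod_prod _ _
  · simp [measure_univ]

lemma aux_isProb_PnX (P : Kernel (E × F) (E × F)) [IsMarkovKernel P]
    (πX : E → Measure F) (hp : ∀ z, IsProbabilityMeasure (πX z)) (n : ℕ) (z : E) :
    IsProbabilityMeasure (PnX P πX n z) := by
  haveI := aux_kpow_markov P n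
  haveI := hp z
  haveI : IsProbabilityMeasure ((πX z).bind fun w => (kpow P n) (z, w)) :=
    aux_isProbabilityMeasure_bind ((Kernel.measurable _).comp measurable_prodMk_left)
      fun w => IsMarkovKernel.isProbabilityMeasure _
  exact Measure.isProbabilityMeasure_map measurable_fst.aemeasurable

lemma aux_isProb_PnY (P : Kernel (E × F) (E × F)) [IsMarkovKernel P]
    (πY : F → Measure E) (hp : ∀ w, IsProbabilityMeasure (πY w)) (n : ℕ) (w : F) :
    IsProbabilityMeasure (PnY P πY n w) := by
  haveI := aux_kpow_markov P n
  haveI := hp w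
  haveI : IsProbabilityMeasure ((πY w).bind fun z => (kpow P n) (z, w)) :=
    aux_isProbabilityMeasure_bind ((Kernel.measurable _).comp measurable_prodMk_right)
      fun z => IsMarkovKernel.isProbabilityMeasure _
  exact Measure.isProbabilityMeasure_map measurable_snd.aemeasurable

lemma aux_PnX_zero (P : Kernel (E × F) (E × F)) (πX : E → Measure F)
    (hp : ∀ z, IsProbabilityMeasure (πX z)) (z : E) :
    PnX P πX 0 z = Measure.dirac z := by
  haveI := hp z
  have hbm : Measurable fun w : F => (kpow P 0) (z, w) :=
    (Kernel.measurable _).comp measurable_prodMk_left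
  ext s hs
  rw [PnX, Measure.map_apply measurable_fst hs,
    Measure.bind_apply (measurable_fst hs) hbm.aemeasurable]
  have h : ∀ w : F, (kpow P 0) (z, w) (Prod.fst ⁻¹' s) = s.indicator 1 z := fun w => by
    show Kernel.id (z, w) (Prod.fst ⁻¹' s) = s.indicator 1 z
    rw [Kernel.id_apply, Measure.dirac_apply' _ (measurable_fst hs)]
    by_cases hz : z ∈ s <;> simp [Set.indicator_apply, hz]
  rw [lintegral_congr h, lintegral_const, measure_univ, mul_one,
    Measure.dirac_apply' _ hs]

lemma aux_PnY_zero (P : Kernel (E × F) (E × F)) (πY : F → Measure E)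
    (hp : ∀ w, IsProbabilityMeasure (πY w)) (w : F) :
    PnY P πY 0 w = Measure.dirac w := by
  haveI := hp w
  have hbm : Measurable fun z : E => (kpow P 0) (z, w) :=
    (Kernel.measurable _).comp measurable_prodMk_right
  ext s hs
  rw [PnY, Measure.map_apply measurable_snd hs,
    Measure.bind_apply (measurable_snd hs) hbm.aemeasurable]
  have h : ∀ z : E, (kpow P 0) (z, w) (Prod.snd ⁻¹' s) = s.indicator 1 w := fun z => by
    show Kernel.id (z, w) (Prod.snd ⁻¹' s) = s.indicator 1 w
    rw [Kernel.id_apply, Measure.dirac_apply' _ (measurable_snd hs)]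
    by_cases hw : w ∈ s <;> simp [Set.indicator_apply, hw]
  rw [lintegral_congr h, lintegral_const, measure_univ, mul_one,
    Measure.dirac_apply' _ hs]

lemma aux_measurable_PnX (P : Kernel (E × F) (E × F))
    (πX : E → Measure F) (hm : Measurable πX) (hp : ∀ z, IsProbabilityMeasure (πX z)) (n : ℕ) :
    Measurable fun z => PnX P πX n z := by
  refine Measure.measurable_of_measurable_coe _ fun s hs => ?_
  have heq : (fun z => PnX P πX n z s) =
      fun z => ∫⁻ w, (kpow P n) (z, w) (Prod.fst ⁻¹' s) ∂(πX z) := by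
    funext z
    have hbm : Measurable fun w : F => (kpow P n) (z, w) :=
      (Kernel.measurable _).comp measurable_prodMk_left
    rw [PnX, Measure.map_apply measurable_fst hs,
      Measure.bind_apply (measurable_fst hs) hbm.aemeasurable]
  rw [heq]
  let κy : Kernel E F := ⟨πX, hm⟩
  haveI : IsMarkovKernel κy := ⟨hp⟩
  exact Measurable.lintegral_kernel_prod_right (κ := κy)
    (Kernel.measurable_coe (kpow P n) (measurable_fst hs))

lemma aux_measurable_PnY (P : Kernel (E × F) (E × F))
    (πY : F → Measure E) (hm : Measurable πY) (hp : ∀ w, IsProbabilityMeasure (πY w)) (n : ℕ) :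
    Measurable fun w => PnY P πY n w := by
  refine Measure.measurable_of_measurable_coe _ fun s hs => ?_
  have heq : (fun w => PnY P πY n w s) =
      fun w => ∫⁻ z, (kpow P n) (z, w) (Prod.snd ⁻¹' s) ∂(πY w) := by
    funext w
    have hbm : Measurable fun z : E => (kpow P n) (z, w) :=
      (Kernel.measurable _).comp measurable_prodMk_right
    rw [PnY, Measure.map_apply measurable_snd hs,
      Measure.bind_apply (measurable_snd hs) hbm.aemeasurable]
  rw [heq]
  let κy : Kernel F E := ⟨πY, hm⟩
  haveI : IsMarkovKernel κy := ⟨hp⟩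
  exact Measurable.lintegral_kernel_prod_right (κ := κy)
    ((Kernel.measurable_coe (kpow P n) (measurable_snd hs)).comp measurable_swap)

lemma aux_kpow_equiv_prod (P : Kernel (E × F) (E × F)) [IsMarkovKernel P]
    (P₀ : Kernel E E) (Q : Kernel F F) (g : E → F → E → F → ℝ≥0∞)
    (hnd : Nondeg P P₀ Q g)
    (πX : E → Measure F) (hpX : ∀ z, IsProbabilityMeasure (πX z))
    (πY : F → Measure E) (hpY : ∀ w, IsProbabilityMeasure (πY w)) (n : ℕ) :
    ∀ z w, kpow P n (z, w) ≪ (PnX P πX n z).prod (PnY P πY n w) ∧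
      (PnX P πX n z).prod (PnY P πY n w) ≪ kpow P n (z, w) := by
  haveI := hnd.markovP₀; haveI := hnd.markovQ
  have hKmeas : ∀ m : ℕ, Measurable fun p : E × F => (kpow P m) p := fun m => Kernel.measurable _
  induction n with
  | zero =>
    intro z w
    have h0 : kpow P 0 (z, w) = (PnX P πX 0 z).prod (PnY P πY 0 w) := by
      rw [aux_PnX_zero P πX hpX, aux_PnY_zero P πY hpY, Measure.dirac_prod_dirac]
      show Kernel.id (z, w) = _
      rw [Kernel.id_apply]
    rw [h0]
    exact ⟨Measure.AbsolutelyContinuous.rfl, Measure.AbsolutelyContinuous.rfl⟩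
  | succ n ih =>
    haveI := aux_kpow_markov P n
    haveI := aux_kpow_markov P (n + 1)
    haveI : ∀ z, IsProbabilityMeasure (PnX P πX n z) := aux_isProb_PnX P πX hpX n
    haveI : ∀ w, IsProbabilityMeasure (PnY P πY n w) := aux_isProb_PnY P πY hpY n
    have hPQ := aux_measurable_prodkernel P₀ Q
    have hsucc : ∀ p : E × F, kpow P (n + 1) p = (kpow P n p).bind P := fun p => by
      rw [aux_kpow_succ' P n, Kernel.comp_apply]
    -- Step (i): the (n+1)-step kernel is equivalent to (Aₙ.bind P₀).prod (Bₙ.bind Q)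
    have hstep : ∀ z w, kpow P (n + 1) (z, w) ≪
          ((PnX P πX n z).bind fun x => P₀ x).prod ((PnY P πY n w).bind fun y => Q y) ∧
        ((PnX P πX n z).bind fun x => P₀ x).prod ((PnY P πY n w).bind fun y => Q y) ≪
          kpow P (n + 1) (z, w) := by
      intro z w
      have e3 := aux_prod_bind_prod (PnX P πX n z) (PnY P πY n w) P₀ Q
      constructor
      · rw [hsucc, ← e3]
        exact (aux_bind_ac_bind (Kernel.measurable P) hPQ Measure.AbsolutelyContinuous.rfl
          (fun q => (aux_nondeg_ac hnd q).1)).trans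
          (aux_bind_ac_bind hPQ hPQ (ih z w).1 fun q => Measure.AbsolutelyContinuous.rfl)
      · rw [hsucc, ← e3]
        exact (aux_bind_ac_bind hPQ hPQ (ih z w).2 fun q =>
          Measure.AbsolutelyContinuous.rfl).trans
          (aux_bind_ac_bind hPQ (Kernel.measurable P) Measure.AbsolutelyContinuous.rfl
            fun q => (aux_nondeg_ac hnd q).2)
    haveI hM0 : ∀ z, IsProbabilityMeasure ((PnX P πX n z).bind fun x => P₀ x) := fun z =>
      aux_isProbabilityMeasure_bind (Kernel.measurable P₀) fun x => by infer_instance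
    haveI hN0 : ∀ w, IsProbabilityMeasure ((PnY P πY n w).bind fun y => Q y) := fun w =>
      aux_isProbabilityMeasure_bind (Kernel.measurable Q) fun y => by infer_instance
    -- Step (ii): PnX (n+1) z is equivalent to (Aₙ z).bind P₀
    have hX : ∀ z, PnX P πX (n + 1) z ≪ ((PnX P πX n z).bind fun x => P₀ x) ∧
        ((PnX P πX n z).bind fun x => P₀ x) ≪ PnX P πX (n + 1) z := by
      intro z
      haveI := hpX z
      have hexp : PnX P πX (n + 1) z =
          (πX z).bind fun w' => ((kpow P (n + 1)) (z, w')).map Prod.fst := by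
        have hbm : Measurable fun w' : F => (kpow P (n + 1)) (z, w') :=
          (Kernel.measurable _).comp measurable_prodMk_left
        rw [PnX, aux_map_bind _ hbm measurable_fst]
      have hfibm : Measurable fun w' : F => ((kpow P (n + 1)) (z, w')).map Prod.fst :=
        (Measure.measurable_map _ measurable_fst).comp
          ((Kernel.measurable _).comp measurable_prodMk_left)
      have hfib : ∀ w' : F, ((kpow P (n + 1)) (z, w')).map Prod.fst ≪
            ((PnX P πX n z).bind fun x => P₀ x) ∧
          ((PnX P πX n z).bind fun x => P₀ x) ≪ ((kpow P (n + 1)) (z, w')).map Prod.fst := by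
        intro w'
        have hmfp : (((PnX P πX n z).bind fun x => P₀ x).prod
            ((PnY P πY n w').bind fun y => Q y)).map Prod.fst =
            (PnX P πX n z).bind fun x => P₀ x := by
          rw [Measure.map_fst_prod, measure_univ, one_smul]
        constructor
        · have := ((hstep z w').1).map measurable_fst
          rwa [hmfp] at this
        · have := ((hstep z w').2).map measurable_fst
          rwa [hmfp] at this
      constructor
      · rw [hexp]
        exact aux_bind_ac_const hfibm fun w' => (hfib w').1
      · rw [hexp]
        exact aux_const_ac_bind (IsProbabilityMeasure.ne_zero (πX z)) hfibm
          fun w' => (hfib w').2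
    -- Step (iii): PnY (n+1) w is equivalent to (Bₙ w).bind Q
    have hY : ∀ w, PnY P πY (n + 1) w ≪ ((PnY P πY n w).bind fun y => Q y) ∧
        ((PnY P πY n w).bind fun y => Q y) ≪ PnY P πY (n + 1) w := by
      intro w
      haveI := hpY w
      have hexp : PnY P πY (n + 1) w =
          (πY w).bind fun z' => ((kpow P (n + 1)) (z', w)).map Prod.snd := by
        have hbm : Measurable fun z' : E => (kpow P (n + 1)) (z', w) :=
          (Kernel.measurable _).comp measurable_prodMk_right
        rw [PnY, aux_map_bind _ hbm measurable_snd]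
      have hfibm : Measurable fun z' : E => ((kpow P (n + 1)) (z', w)).map Prod.snd :=
        (Measure.measurable_map _ measurable_snd).comp
          ((Kernel.measurable _).comp measurable_prodMk_right)
      have hfib : ∀ z' : E, ((kpow P (n + 1)) (z', w)).map Prod.snd ≪
            ((PnY P πY n w).bind fun y => Q y) ∧
          ((PnY P πY n w).bind fun y => Q y) ≪ ((kpow P (n + 1)) (z', w)).map Prod.snd := by
        intro z'
        have hmfp : (((PnX P πX n z').bind fun x => P₀ x).prod
            ((PnY P πY n w).bind fun y => Q y)).map Prod.snd =
            (PnY P πY n w).bind fun y => Q y := by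
          rw [Measure.map_snd_prod, measure_univ, one_smul]
        constructor
        · have := ((hstep z' w).1).map measurable_snd
          rwa [hmfp] at this
        · have := ((hstep z' w).2).map measurable_snd
          rwa [hmfp] at this
      constructor
      · rw [hexp]
        exact aux_bind_ac_const hfibm fun z' => (hfib z').1
      · rw [hexp]
        exact aux_const_ac_bind (IsProbabilityMeasure.ne_zero (πY w)) hfibm
          fun z' => (hfib z').2
    -- combine
    intro z w
    haveI := aux_isProb_PnX P πX hpX (n + 1) z
    haveI := aux_isProb_PnY P πY hpY (n + 1) w
    constructor
    · exact (hstep z w).1.trans (Measure.AbsolutelyContinuous.prod (hX z).2 (hY w).2)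
    · exact (Measure.AbsolutelyContinuous.prod (hX z).1 (hY w).1).trans (hstep z w).2

end AuxMain

theorem iterated_kernel_nondegenerate
    {E F : Type*}
    [MeasurableSpace E] [TopologicalSpace E] [PolishSpace E] [BorelSpace E]
    [MeasurableSpace F] [TopologicalSpace F] [PolishSpace F] [BorelSpace F]
    (P : Kernel (E × F) (E × F)) [IsMarkovKernel P]
    (π : Measure (E × F)) [IsProbabilityMeasure π]
    (hπinv : π.bind (fun p => P p) = π)
    (P₀ : Kernel E E) (Q : Kernel F F) (g : E → F → E → F → ℝ≥0∞)
    (hnd : Nondeg P P₀ Q g)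
    (πX : E → Measure F) (hπX : IsCondYgivenX π πX)
    (πY : F → Measure E) (hπY : IsCondXgivenY π πY)
    :
    ∀ n : ℕ, ∃ G : E → F → E → F → ℝ≥0∞,
      (Measurable fun q : (E × F) × E × F => G q.1.1 q.1.2 q.2.1 q.2.2) ∧
      (∀ z w z' w', 0 < G z w z' w' ∧ G z w z' w' < ⊤) ∧
      ∀ (z : E) (w : F), (kpow P n) (z, w) =
        (measProd (PnX P πX n z) (PnY P πY n w)).withDensity fun q => G z w q.1 q.2 := by
  classical
  intro n
  haveI := hnd.markovP₀; haveI := hnd.markovQ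
  haveI := aux_kpow_markov P n
  have hpX : ∀ z, IsProbabilityMeasure (πX z) := hπX.1
  have hpY : ∀ w, IsProbabilityMeasure (πY w) := hπY.1
  have hπXmeas : Measurable πX :=
    Measure.measurable_of_measurable_coe _ fun B hB => (hπX.2 B hB).1
  have hπYmeas : Measurable πY :=
    Measure.measurable_of_measurable_coe _ fun A hA => (hπY.2 A hA).1
  haveI : ∀ z, IsProbabilityMeasure (PnX P πX n z) := aux_isProb_PnX P πX hpX n
  haveI : ∀ w, IsProbabilityMeasure (PnY P πY n w) := aux_isProb_PnY P πY hpY n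
  -- the product kernel η
  let κ1 : Kernel (E × F) E :=
    ⟨fun p => PnX P πX n p.1, (aux_measurable_PnX P πX hπXmeas hpX n).comp measurable_fst⟩
  let κ2 : Kernel (E × F) F :=
    ⟨fun p => PnY P πY n p.2, (aux_measurable_PnY P πY hπYmeas hpY n).comp measurable_snd⟩
  haveI : IsMarkovKernel κ1 := ⟨fun p => by exact aux_isProb_PnX P πX hpX n p.1⟩
  haveI : IsMarkovKernel κ2 := ⟨fun p => by exact aux_isProb_PnY P πY hpY n p.2⟩
  let η : Kernel (E × F) (E × F) := κ1 ×ₖ κ2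
  have hηapp : ∀ p : E × F, η p = (PnX P πX n p.1).prod (PnY P πY n p.2) := fun p => by
    rw [Kernel.prod_apply]; rfl
  have hequiv := aux_kpow_equiv_prod P P₀ Q g hnd πX hpX πY hpY n
  have hac : ∀ p : E × F, kpow P n p ≪ η p := fun p => by
    rw [hηapp]; exact (hequiv p.1 p.2).1
  have hrev : ∀ p : E × F, η p ≪ kpow P n p := fun p => by
    rw [hηapp]; exact (hequiv p.1 p.2).2
  set rn : E × F → E × F → ℝ≥0∞ := Kernel.rnDeriv (kpow P n) η with hrn_def
  have hrnmeas : Measurable fun p : (E × F) × E × F => rn p.1 p.2 :=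
    Kernel.measurable_rnDeriv (kpow P n) η
  refine ⟨fun z w z' w' =>
    if rn (z, w) (z', w') = 0 ∨ rn (z, w) (z', w') = ⊤ then 1 else rn (z, w) (z', w'),
    ?_, ?_, ?_⟩
  · -- measurability
    exact Measurable.ite
      (((hrnmeas (measurableSet_singleton 0)).union (hrnmeas (measurableSet_singleton ⊤))))
      measurable_const hrnmeas
  · -- positivity and finiteness
    intro z w z' w'
    dsimp only
    split_ifs with h
    · exact ⟨zero_lt_one, ENNReal.one_lt_top⟩
    · push_neg at h
      exact ⟨pos_iff_ne_zero.mpr h.1, lt_top_iff_ne_top.mpr h.2⟩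
  · -- the factorization
    intro z w
    have hsf : SFinite (PnY P πY n w) := inferInstance
    rw [aux_measProd_eq_prod, ← hηapp (z, w)]
    have h1 : kpow P n (z, w) = (η (z, w)).withDensity (rn (z, w)) := by
      rw [← Kernel.withDensity_rnDeriv_eq (hac (z, w)),
        Kernel.withDensity_apply _ (Kernel.measurable_rnDeriv (kpow P n) η)]
    have hae : (fun q : E × F =>
        if rn (z, w) (q.1, q.2) = 0 ∨ rn (z, w) (q.1, q.2) = ⊤ then 1
          else rn (z, w) (q.1, q.2)) =ᵐ[η (z, w)] rn (z, w) := by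
      filter_upwards [Kernel.rnDeriv_lt_top (kpow P n) η (a := (z, w)),
        (Kernel.rnDeriv_pos (hac (z, w))).filter_mono (hrev (z, w)).ae_le]
        with x hlt hpos
      have hx : ¬(rn (z, w) (x.1, x.2) = 0 ∨ rn (z, w) (x.1, x.2) = ⊤) := by
        rintro (h | h) <;> simp only [Prod.mk.eta] at h
        · exact hpos.ne' h
        · exact hlt.ne h
      rw [if_neg hx]
    rw [h1, withDensity_congr_ae hae]

end
end
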